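/- For every t ≥ T̃ the following hold: (i) y(t) ≤ z(t); (ii) g(y(t)) ≥ g − n·log(1 + X(t)) = g + g'·(z(t) − γ); (iii) g(y(t)) − t ≤ ψ(y(t)). -/

import Mathlib

open Filter
open Real Set

private lemma aux_mono_Ici {f f' : ℝ → ℝ} {a : ℝ}
    (hd : ∀ t, a ≤ t → HasDerivAt f (f' t) t)
    (h0 : ∀ t, a ≤ t → 0 ≤ f' t) :
    MonotoneOn f (Set.Ici a) := by
  apply monotoneOn_of_deriv_nonneg (convex_Ici a)
  · exact fun t ht => (hd t ht).continuousAt.continuousWithinAt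
  · intro t ht
    rw [interior_Ici] at ht
    exact (hd t ht.le).differentiableAt.differentiableWithinAt
  · intro t ht
    rw [interior_Ici] at ht
    rw [(hd t ht.le).deriv]
    exact h0 t ht.le

private lemma aux_nonpos_of_tendsto {f f' : ℝ → ℝ} {a : ℝ}
    (hd : ∀ t, a ≤ t → HasDerivAt f (f' t) t)
    (h0 : ∀ t, a ≤ t → 0 ≤ f' t)
    (hlim : Tendsto f atTop (nhds 0)) : ∀ t, a ≤ t → f t ≤ 0 := by
  intro t ht
  have hmono := aux_mono_Ici hd h0
  refine ge_of_tendsto hlim ?_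
  filter_upwards [eventually_ge_atTop t] with s hs
  exact hmono ht (le_trans ht hs) hs

private lemma aux_nonneg_of_tendsto {f f' : ℝ → ℝ} {a : ℝ}
    (hd : ∀ t, a ≤ t → HasDerivAt f (f' t) t)
    (h0 : ∀ t, a ≤ t → f' t ≤ 0)
    (hlim : Tendsto f atTop (nhds 0)) : ∀ t, a ≤ t → 0 ≤ f t := by
  intro t ht
  have h := aux_nonpos_of_tendsto (f := fun s => -f s) (f' := fun s => -f' s)
    (fun s hs => (hd s hs).neg) (fun s hs => neg_nonneg.2 (h0 s hs)) (by simpa using hlim.neg) t ht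
  simpa using h

private lemma aux_gronwall {d d' u : ℝ → ℝ} {a : ℝ}
    (hd : ∀ t, a ≤ t → HasDerivAt d (d' t) t)
    (key : ∀ t, a ≤ t → 0 ≤ d t → 0 ≤ d t + d' t)
    (hu : ∀ t, a ≤ t → Real.exp t * d t ≤ u t)
    (hu0 : Tendsto u atTop (nhds 0)) :
    ∀ t, a ≤ t → d t ≤ 0 := by
  intro t₀ ht₀
  by_contra hcon
  push_neg at hcon
  have hRd : ∀ s, a ≤ s → HasDerivAt (fun r => Real.exp r * d r) (Real.exp s * (d s + d' s)) s := by
    intro s hs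
    have h := (Real.hasDerivAt_exp s).mul (hd s hs)
    refine h.congr_deriv ?_
    symm
    ring
  -- step 1 : positivity persists
  have hpos : ∀ s, t₀ ≤ s → 0 < d s := by
    intro s hs
    by_contra hns
    push_neg at hns
    set S : Set ℝ := Set.Icc t₀ s ∩ d ⁻¹' (Set.Iic 0) with hS
    have hdc : ContinuousOn d (Set.Icc t₀ s) := fun r hr =>
      (hd r (le_trans (le_trans ht₀ hr.1) le_rfl)).continuousAt.continuousWithinAt
    have hSclosed : IsClosed S :=
      hdc.preimage_isClosed_of_isClosed isClosed_Icc isClosed_Iic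
    have hSne : S.Nonempty := ⟨s, ⟨⟨hs, le_rfl⟩, hns⟩⟩
    have hSbdd : BddBelow S := ⟨t₀, fun r hr => hr.1.1⟩
    set s₁ := sInf S with hs₁
    have hs₁mem : s₁ ∈ S := hSclosed.csInf_mem hSne hSbdd
    have hs₁ge : t₀ ≤ s₁ := hs₁mem.1.1
    have ht₀S : t₀ ∉ S := fun h => absurd h.2 (by simp only [Set.mem_preimage, Set.mem_Iic, not_le]; exact hcon)
    have hs₁gt : t₀ < s₁ := lt_of_le_of_ne hs₁ge (fun h => ht₀S (h ▸ hs₁mem))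
    have hmid : ∀ r, t₀ ≤ r → r < s₁ → 0 < d r := by
      intro r hr1 hr2
      by_contra hnr
      push_neg at hnr
      have hrS : r ∈ S := ⟨⟨hr1, le_trans hr2.le hs₁mem.1.2⟩, hnr⟩
      exact absurd (csInf_le hSbdd hrS) (not_le.2 hr2)
    -- R monotone on [t₀, s₁]
    have hmono : MonotoneOn (fun r => Real.exp r * d r) (Set.Icc t₀ s₁) := by
      apply monotoneOn_of_deriv_nonneg (convex_Icc t₀ s₁)
      · intro r hr
        exact (hRd r (le_trans ht₀ hr.1)).continuousAt.continuousWithinAt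
      · intro r hr
        rw [interior_Icc] at hr
        exact (hRd r (le_trans ht₀ hr.1.le)).differentiableAt.differentiableWithinAt
      · intro r hr
        rw [interior_Icc] at hr
        rw [(hRd r (le_trans ht₀ hr.1.le)).deriv]
        have hdr : 0 < d r := hmid r hr.1.le hr.2
        have := key r (le_trans ht₀ hr.1.le) hdr.le
        positivity
    have h1 : Real.exp t₀ * d t₀ ≤ Real.exp s₁ * d s₁ :=
      hmono ⟨le_rfl, hs₁ge⟩ ⟨hs₁ge, le_rfl⟩ hs₁ge
    have h2 : 0 < Real.exp t₀ * d t₀ := by positivity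
    have h3 : d s₁ ≤ 0 := hs₁mem.2
    nlinarith [Real.exp_pos s₁]
  -- step 2 : R monotone on [t₀, ∞)
  have hmono2 : MonotoneOn (fun r => Real.exp r * d r) (Set.Ici t₀) := by
    apply aux_mono_Ici (f' := fun s => Real.exp s * (d s + d' s))
    · exact fun s hs => hRd s (le_trans ht₀ hs)
    · intro s hs
      have := key s (le_trans ht₀ hs) (hpos s hs).le
      positivity
  have hδ : 0 < Real.exp t₀ * d t₀ := by positivity
  have hev : ∀ᶠ s in atTop, u s < Real.exp t₀ * d t₀ := hu0.eventually (gt_mem_nhds hδ)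
  obtain ⟨s, hs1, hs2⟩ := (hev.and (eventually_ge_atTop t₀)).exists
  have h4 : Real.exp t₀ * d t₀ ≤ Real.exp s * d s := hmono2 (self_mem_Ici) hs2 hs2
  have h5 := hu s (le_trans ht₀ hs2)
  linarith


set_option maxHeartbeats 2000000

/-- Lemma 3.3, estimates (3.18)-(3.20): for `t ≥ T̃` one has `y(t) ≤ z(t)`,
`g(y(t)) ≥ g - n log(1+X(t)) = g + g'(z(t)-γ)` and `g(y(t)) - t ≤ ψ(y(t))`, where
`T₁ = g + (n-1) log(((n-1)/n) g')`, `X(t) = e^{(T₁-t)/(n-1)}`,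
`z(t) = γ - (n/g') log(1+X(t))` and
`ψ(θ) = g(θ) - g + ((n-1)/n)(γ-θ) g' - (n-1) log(((n-1)/n) g')`. -/
theorem comparison_estimates
    (n : ℕ) (hn : 2 ≤ n)
    (g g' g'' : ℝ → ℝ)
    (hgd1 : ∀ x > (0 : ℝ), HasDerivAt g (g' x) x)
    (hgd2 : ∀ x > (0 : ℝ), HasDerivAt g' (g'' x) x)
    (hgc : ContinuousOn g'' (Set.Ioi 0))
    (s₀ : ℝ) (hs₀ : 0 < s₀) (hgpos : ∀ x ≥ s₀, 0 < g' x ∧ 0 < g'' x)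
    (γ : ℝ) (hγ : s₀ < γ)
    (Tγ : ℝ) (y : ℝ → ℝ)
    (hycont : ContinuousOn y (Set.Ici Tγ))
    (hydiff : ∀ t, Tγ < t → DifferentiableAt ℝ y t)
    (hypos : ∀ t, Tγ < t → 0 < y t)
    (hy'pos : ∀ t, Tγ < t → 0 < deriv y t)
    (hyT : y Tγ = 0)
    (hyeq : ∀ t, Tγ < t → HasDerivAt (fun u : ℝ => deriv y u ^ (n - 1))
      (-Real.exp (g (y t) - t)) t)
    (hylim : Tendsto y atTop (nhds γ))
    (hy'lim : Tendsto (deriv y) atTop (nhds 0))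
    (T' : ℝ) (hT'1 : Tγ < T') (hT'2 : y T' = s₀) :
    ∀ t, T' ≤ t →
      let T₁ := g γ + ((n : ℝ) - 1) * Real.log ((((n : ℝ) - 1) / (n : ℝ)) * g' γ)
      let X := Real.exp ((T₁ - t) / ((n : ℝ) - 1))
      let z := γ - (n : ℝ) / g' γ * Real.log (1 + X)
      y t ≤ z ∧
      g γ - (n : ℝ) * Real.log (1 + X) ≤ g (y t) ∧
      g γ - (n : ℝ) * Real.log (1 + X) = g γ + g' γ * (z - γ) ∧
      g (y t) - t ≤ g (y t) - g γ + (((n : ℝ) - 1) / (n : ℝ)) * (γ - y t) * g' γ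
        - ((n : ℝ) - 1) * Real.log ((((n : ℝ) - 1) / (n : ℝ)) * g' γ) := by
  have hn1 : 1 ≤ n := by omega
  have hnR : (2:ℝ) ≤ (n:ℝ) := by exact_mod_cast hn
  have hm0 : (0:ℝ) < (n:ℝ) - 1 := by linarith
  have hcast : ((n - 1 : ℕ) : ℝ) = (n:ℝ) - 1 := by
    push_cast [Nat.cast_sub hn1]; ring
  have hγ0 : (0:ℝ) < γ := hs₀.trans hγ
  have hP : 0 < g' γ := (hgpos γ hγ.le).1
  set κ : ℝ := (((n : ℝ) - 1) / (n : ℝ)) * g' γ with hκdef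
  have hκ : 0 < κ := by
    have : (0:ℝ) < (n:ℝ) := by linarith
    positivity
  set T₁ : ℝ := g γ + ((n : ℝ) - 1) * Real.log κ with hT₁def
  set X : ℝ → ℝ := fun t => Real.exp ((T₁ - t) / ((n : ℝ) - 1)) with hXdef
  set E : ℝ → ℝ := fun t => Real.exp ((g γ - t) / ((n : ℝ) - 1)) with hEdef
  set ζ : ℝ → ℝ := fun t => E t / (1 + X t) with hζdef
  set Jz : ℝ → ℝ := fun t => ζ t ^ (n-1) with hJzdef
  set ω : ℝ → ℝ := fun t => g' γ * (g' (y t))⁻¹ * ζ t with hωdef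
  set W : ℝ → ℝ := fun t => ω t ^ (n-1) with hWdef
  set A : ℝ → ℝ := fun t => Real.exp (g (y t) - t) with hAdef
  set J : ℝ → ℝ := fun u : ℝ => deriv y u ^ (n - 1) with hJdef
  -- positivity of basic functions
  have hXpos : ∀ t, 0 < X t := fun t => Real.exp_pos _
  have hEpos : ∀ t, 0 < E t := fun t => Real.exp_pos _
  have h1X : ∀ t, 0 < 1 + X t := fun t => by have := hXpos t; linarith
  have hζpos : ∀ t, 0 < ζ t := fun t => div_pos (hEpos t) (h1X t)
  have hApos : ∀ t, 0 < A t := fun t => Real.exp_pos _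
  -- basic identities
  have hXκE : ∀ t, X t = κ * E t := by
    intro t
    rw [hXdef, hEdef]
    show Real.exp ((T₁ - t) / ((n : ℝ) - 1)) = κ * Real.exp ((g γ - t) / ((n : ℝ) - 1))
    rw [hT₁def]
    rw [show (g γ + ((n:ℝ)-1) * Real.log κ - t) / ((n:ℝ)-1)
        = Real.log κ + (g γ - t) / ((n:ℝ)-1) by field_simp; ring]
    rw [Real.exp_add, Real.exp_log hκ]
  have hEpow : ∀ t, E t ^ (n-1) = Real.exp (g γ - t) := by
    intro t
    rw [hEdef]
    show Real.exp ((g γ - t) / ((n : ℝ) - 1)) ^ (n-1) = Real.exp (g γ - t)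
    rw [← Real.exp_nat_mul, hcast]
    congr 1
    field_simp
  -- y basic facts
  have hyd : ∀ t, Tγ < t → HasDerivAt y (deriv y t) t := fun t ht => (hydiff t ht).hasDerivAt
  have hymono : MonotoneOn y (Set.Ici Tγ) := by
    apply monotoneOn_of_deriv_nonneg (convex_Ici Tγ) hycont
    · intro t ht
      rw [interior_Ici] at ht
      exact (hydiff t ht).differentiableWithinAt
    · intro t ht
      rw [interior_Ici] at ht
      exact (hy'pos t ht).le
  have hyle : ∀ t, Tγ ≤ t → y t ≤ γ := by
    intro t ht
    refine ge_of_tendsto hylim ?_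
    filter_upwards [eventually_ge_atTop t] with s hs
    exact hymono ht (le_trans ht hs) hs
  have hys : ∀ t, T' ≤ t → s₀ ≤ y t := by
    intro t ht
    rw [← hT'2]
    exact hymono (le_of_lt hT'1) (le_trans hT'1.le ht) ht
  have hy0 : ∀ t, T' ≤ t → 0 < y t := fun t ht => hs₀.trans_le (hys t ht)
  have hTle : ∀ t : ℝ, T' ≤ t → Tγ < t := fun t ht => lt_of_lt_of_le hT'1 ht
  have hjpos : ∀ t, T' ≤ t → 0 < deriv y t := fun t ht => hy'pos t (hTle t ht)
  have hJpos : ∀ t, T' ≤ t → 0 < J t := fun t ht => pow_pos (hjpos t ht) _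
  -- monotonicity of g and g' on [s₀, ∞)
  have hgmono : MonotoneOn g (Set.Ici s₀) := by
    apply monotoneOn_of_deriv_nonneg (convex_Ici s₀)
    · exact fun x hx => (hgd1 x (hs₀.trans_le hx)).continuousAt.continuousWithinAt
    · intro x hx
      rw [interior_Ici] at hx
      exact (hgd1 x (hs₀.trans hx)).differentiableAt.differentiableWithinAt
    · intro x hx
      rw [interior_Ici] at hx
      rw [(hgd1 x (hs₀.trans hx)).deriv]
      exact (hgpos x hx.le).1.le
  have hg'mono : MonotoneOn g' (Set.Ici s₀) := by
    apply monotoneOn_of_deriv_nonneg (convex_Ici s₀)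
    · exact fun x hx => (hgd2 x (hs₀.trans_le hx)).continuousAt.continuousWithinAt
    · intro x hx
      rw [interior_Ici] at hx
      exact (hgd2 x (hs₀.trans hx)).differentiableAt.differentiableWithinAt
    · intro x hx
      rw [interior_Ici] at hx
      rw [(hgd2 x (hs₀.trans hx)).deriv]
      exact (hgpos x hx.le).2.le
  have hgyle : ∀ t, T' ≤ t → g (y t) ≤ g γ := fun t ht =>
    hgmono (hys t ht) hγ.le (hyle t (hTle t ht).le)
  have hg'yle : ∀ t, T' ≤ t → g' (y t) ≤ g' γ := fun t ht =>
    hg'mono (hys t ht) hγ.le (hyle t (hTle t ht).le)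
  have hg'ypos : ∀ t, T' ≤ t → 0 < g' (y t) := fun t ht => (hgpos _ (hys t ht)).1
  have hg''ynn : ∀ t, T' ≤ t → 0 ≤ g'' (y t) := fun t ht => (hgpos _ (hys t ht)).2.le
  have hωpos : ∀ t, T' ≤ t → 0 < ω t := by
    intro t ht
    rw [hωdef]
    have := hg'ypos t ht
    have := hζpos t
    positivity
  -- limits
  have hgyTop : Tendsto (fun t => g (y t)) atTop (nhds (g γ)) :=
    ((hgd1 γ hγ0).continuousAt.tendsto).comp hylim
  have hg'yTop : Tendsto (fun t => g' (y t)) atTop (nhds (g' γ)) :=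
    ((hgd2 γ hγ0).continuousAt.tendsto).comp hylim
  have hATop : Tendsto A atTop (nhds 0) := by
    rw [hAdef]
    have h1 : Tendsto (fun t : ℝ => g (y t) - t) atTop atBot :=
      hgyTop.add_atBot tendsto_neg_atTop_atBot |>.congr (fun t => (sub_eq_add_neg _ _).symm)
    exact Real.tendsto_exp_atBot.comp h1
  have hJTop : Tendsto J atTop (nhds 0) := by
    rw [hJdef]
    have := hy'lim.pow (n-1)
    simpa [zero_pow (show n-1 ≠ 0 by omega)] using this
  have hKTop : Tendsto (fun t => deriv y t ^ n) atTop (nhds 0) := by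
    have := hy'lim.pow n
    simpa [zero_pow (show n ≠ 0 by omega)] using this
  have hXTop : Tendsto X atTop (nhds 0) := by
    rw [hXdef]
    apply Real.tendsto_exp_atBot.comp
    apply Tendsto.atBot_div_const hm0
    exact tendsto_const_nhds.add_atBot tendsto_neg_atTop_atBot |>.congr (fun t => (sub_eq_add_neg _ _).symm)
  -- derivatives
  have hgy : ∀ t, Tγ < t → HasDerivAt (fun s => g (y s)) (g' (y t) * deriv y t) t := by
    intro t ht
    exact (hgd1 (y t) (hypos t ht)).comp t (hyd t ht)
  have hAd : ∀ t, Tγ < t → HasDerivAt A ((g' (y t) * deriv y t - 1) * A t) t := by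
    intro t ht
    have h := ((hgy t ht).sub (hasDerivAt_id t)).exp
    refine h.congr_deriv ?_
    symm
    rw [hAdef]
    simp only [id_eq, Pi.sub_apply]
    ring
  have hJd : ∀ t, Tγ < t → HasDerivAt J (-(A t)) t := fun t ht => hyeq t ht
  -- derivative of deriv y
  have hpowinv : ∀ u, Tγ < u → (J u) ^ (((n:ℝ)-1)⁻¹) = deriv y u := by
    intro u hu
    rw [hJdef]
    show ((deriv y u ^ (n-1) : ℝ)) ^ (((n:ℝ)-1)⁻¹) = deriv y u
    rw [← Real.rpow_natCast (deriv y u) (n-1), ← Real.rpow_mul (hy'pos u hu).le, hcast,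
      mul_inv_cancel₀ hm0.ne', Real.rpow_one]
  have hjd : ∀ t, Tγ < t → HasDerivAt (deriv y)
      (-(A t) * deriv y t / (((n:ℝ)-1) * J t)) t := by
    intro t ht
    have hJp : 0 < J t := pow_pos (hy'pos t ht) _
    have h1 : HasDerivAt (fun u => (J u) ^ (((n:ℝ)-1)⁻¹))
        (-(A t) * (((n:ℝ)-1)⁻¹) * (J t) ^ ((((n:ℝ)-1)⁻¹) - 1)) t :=
      (hJd t ht).rpow_const (Or.inl hJp.ne')
    have heq : deriv y =ᶠ[nhds t] (fun u => (J u) ^ (((n:ℝ)-1)⁻¹)) := by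
      filter_upwards [Ioi_mem_nhds ht] with u hu
      exact (hpowinv u hu).symm
    have h2 := h1.congr_of_eventuallyEq heq
    refine h2.congr_deriv ?_
    symm
    rw [Real.rpow_sub hJp, Real.rpow_one, hpowinv t ht]
    field_simp
  have hKd : ∀ t, Tγ < t → HasDerivAt (fun u => deriv y u ^ n)
      (-((n:ℝ)/((n:ℝ)-1)) * A t * deriv y t) t := by
    intro t ht
    have h := (hjd t ht).pow n
    refine h.congr_deriv ?_
    symm
    have hJp : 0 < J t := pow_pos (hy'pos t ht) _
    have hjrw : deriv y t ^ (n - 1) = J t := by rw [hJdef]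
    rw [hjrw]
    field_simp
  have hg'yd : ∀ t, Tγ < t → HasDerivAt (fun s => g' (y s)) (g'' (y t) * deriv y t) t := by
    intro t ht
    exact (hgd2 (y t) (hypos t ht)).comp t (hyd t ht)
  have hXd : ∀ t : ℝ, HasDerivAt X (-(X t)/((n:ℝ)-1)) t := by
    intro t
    have h := (((hasDerivAt_id t).const_sub T₁).div_const ((n:ℝ)-1)).exp
    refine h.congr_deriv ?_
    symm
    rw [hXdef]
    field_simp
    rfl
  have hEd : ∀ t : ℝ, HasDerivAt E (-(E t)/((n:ℝ)-1)) t := by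
    intro t
    have h := (((hasDerivAt_id t).const_sub (g γ)).div_const ((n:ℝ)-1)).exp
    refine h.congr_deriv ?_
    symm
    rw [hEdef]
    field_simp
    rfl
  have hζd : ∀ t : ℝ, HasDerivAt ζ (-(ζ t)/(((n:ℝ)-1) * (1 + X t))) t := by
    intro t
    have h := (hEd t).div ((hasDerivAt_const t (1:ℝ)).add (hXd t)) (h1X t).ne'
    refine h.congr_deriv ?_
    symm
    rw [hζdef]
    show -(E t / (1 + X t)) / (((n:ℝ)-1) * (1 + X t))
      = (-(E t)/((n:ℝ)-1) * (1 + X t) - E t * (0 + -(X t)/((n:ℝ)-1))) / (1 + X t)^2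
    field_simp
    ring
  have hJzd : ∀ t : ℝ, HasDerivAt Jz (-(Jz t)/(1 + X t)) t := by
    intro t
    have h := (hζd t).pow (n-1)
    refine h.congr_deriv ?_
    symm
    have hps : ζ t ^ (n-1-1) * ζ t = ζ t ^ (n-1) := by
      rw [← pow_succ]
      congr 1
      omega
    rw [hJzdef]
    show -(ζ t ^ (n-1))/(1 + X t) = ((n-1 : ℕ):ℝ) * ζ t ^ (n-1-1) * (-(ζ t)/(((n:ℝ)-1) * (1 + X t)))
    rw [hcast]
    rw [show ((n:ℝ)-1) * ζ t ^ (n-1-1) * (-(ζ t)/(((n:ℝ)-1) * (1 + X t)))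
        = -((ζ t ^ (n-1-1) * ζ t))/(1 + X t) by field_simp]
    rw [hps]
  have hωd : ∀ t, T' ≤ t → HasDerivAt ω
      ((g' γ * (-(g'' (y t) * deriv y t)/(g' (y t))^2)) * ζ t
        + (g' γ * (g' (y t))⁻¹) * (-(ζ t)/(((n:ℝ)-1) * (1 + X t)))) t := by
    intro t ht
    have hti := hTle t ht
    have hinv : HasDerivAt (fun s => (g' (y s))⁻¹)
        (-(g'' (y t) * deriv y t)/(g' (y t))^2) t := (hg'yd t hti).inv (hg'ypos t ht).ne'
    exact ((hinv.const_mul (g' γ)).mul (hζd t)).congr_deriv (by ring)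
  -- B̃ ≥ 0
  have hBt : ∀ t, T' ≤ t →
      0 ≤ J t - A t - (((n:ℝ)-1)/(n:ℝ)) * (g' (y t) * deriv y t ^ n) := by
    apply aux_nonneg_of_tendsto
      (f' := fun t => -((((n:ℝ)-1)/(n:ℝ)) * g'' (y t) * (deriv y t ^ n * deriv y t)))
    · intro t ht
      have hti := hTle t ht
      have h := ((hJd t hti).sub (hAd t hti)).sub
        (((hg'yd t hti).mul (hKd t hti)).const_mul (((n:ℝ)-1)/(n:ℝ)))
      refine h.congr_deriv ?_
      symm
      have hn0 : ((n:ℝ)) ≠ 0 := by positivity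
      have hm0' : ((n:ℝ)-1) ≠ 0 := hm0.ne'
      field_simp
      ring
    · intro t ht
      have h1 : 0 ≤ (((n:ℝ)-1)/(n:ℝ)) * g'' (y t) * (deriv y t ^ n * deriv y t) := by
        apply mul_nonneg (mul_nonneg (by positivity) (hg''ynn t ht))
        have := hjpos t ht
        positivity
      linarith
    · have h := (hJTop.sub hATop).sub
        ((hg'yTop.mul hKTop).const_mul (((n:ℝ)-1)/(n:ℝ)))
      simpa using h
  -- B ≤ 0
  have hB : ∀ t, T' ≤ t → J t - A t - κ * (deriv y t ^ n) ≤ 0 := by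
    apply aux_nonpos_of_tendsto
      (f' := fun t => (g' γ - g' (y t)) * (deriv y t * A t))
    · intro t ht
      have hti := hTle t ht
      have h := ((hJd t hti).sub (hAd t hti)).sub ((hKd t hti).const_mul κ)
      refine h.congr_deriv ?_
      symm
      rw [hκdef]
      have hn0 : ((n:ℝ)) ≠ 0 := by positivity
      field_simp
      ring
    · intro t ht
      apply mul_nonneg
      · linarith [hg'yle t ht]
      · have h1 := hjpos t ht
        have h2 := hApos t
        positivity
    · have h := (hJTop.sub hATop).sub (hKTop.const_mul κ)
      simpa using h
  -- J ≤ exp (g γ - t)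
  have hJe : ∀ t, T' ≤ t → J t ≤ Real.exp (g γ - t) := by
    have key : ∀ t, T' ≤ t → J t - Real.exp (g γ - t) ≤ 0 := by
      apply aux_nonpos_of_tendsto (f' := fun t => -(A t) + Real.exp (g γ - t))
      · intro t ht
        have h := (hJd t (hTle t ht)).sub (((hasDerivAt_id t).const_sub (g γ)).exp)
        refine h.congr_deriv ?_
        symm
        simp only [id_eq]
        ring
      · intro t ht
        have hle : A t ≤ Real.exp (g γ - t) := by
          rw [hAdef]
          exact Real.exp_le_exp.2 (by linarith [hgyle t ht])
        linarith
      · have hexp : Tendsto (fun t : ℝ => Real.exp (g γ - t)) atTop (nhds 0) := by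
          apply Real.tendsto_exp_atBot.comp
          exact tendsto_const_nhds.add_atBot tendsto_neg_atTop_atBot |>.congr
            (fun t => (sub_eq_add_neg _ _).symm)
        simpa using hJTop.sub hexp
    intro t ht
    linarith [key t ht]
  have hκζ : ∀ t : ℝ, κ * ζ t = X t / (1 + X t) := by
    intro t
    rw [hζdef]
    show κ * (E t / (1 + X t)) = X t / (1 + X t)
    rw [hXκE t]
    ring
  -- pointwise value equations (while definitions are transparent)
  have hJval : ∀ t : ℝ, J t = deriv y t ^ (n-1) := fun _ => rfl
  have hAval : ∀ t : ℝ, A t = Real.exp (g (y t) - t) := fun _ => rfl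
  have hEval : ∀ t : ℝ, E t = Real.exp ((g γ - t) / ((n:ℝ)-1)) := fun _ => rfl
  have hXval : ∀ t : ℝ, X t = Real.exp ((T₁ - t) / ((n:ℝ)-1)) := fun _ => rfl
  have hζval : ∀ t : ℝ, ζ t = E t / (1 + X t) := fun _ => rfl
  have hJzval : ∀ t : ℝ, Jz t = ζ t ^ (n-1) := fun _ => rfl
  have hωval : ∀ t : ℝ, ω t = g' γ * (g' (y t))⁻¹ * ζ t := fun _ => rfl
  have hWval : ∀ t : ℝ, W t = ω t ^ (n-1) := fun _ => rfl
  -- derivative of W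
  have hWd : ∀ t, T' ≤ t → HasDerivAt W (((n - 1 : ℕ) : ℝ) * ω t ^ (n-1-1) *
      ((g' γ * (-(g'' (y t) * deriv y t)/(g' (y t))^2)) * ζ t
        + (g' γ * (g' (y t))⁻¹) * (-(ζ t)/(((n:ℝ)-1) * (1 + X t))))) t :=
    fun t ht => (hωd t ht).pow (n-1)
  clear_value J A E ζ Jz ω W X T₁ κ
  -- lower comparison : Jz ≤ J
  have hlow : ∀ t, T' ≤ t → Jz t - J t ≤ 0 := by
    refine aux_gronwall (a := T') (d := fun t => Jz t - J t)
      (d' := fun t => -(Jz t)/(1 + X t) + A t)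
      (u := fun t => Real.exp (g γ) - Real.exp (g (y t))) ?_ ?_ ?_ ?_
    · intro t ht
      have h := (hJzd t).sub (hJd t (hTle t ht))
      exact h.congr_deriv (by ring)
    · intro t ht hd0
      have hjζ : deriv y t ≤ ζ t := by
        apply le_of_pow_le_pow_left₀ (show n-1 ≠ 0 by omega) (hζpos t).le
        have h : J t ≤ Jz t := by linarith
        rw [hJval, hJzval] at h
        exact h
      have h1 : J t - κ * (deriv y t ^ n) ≤ A t := by linarith [hB t ht]
      have h2 : κ * deriv y t ^ n ≤ κ * ζ t ^ n :=
        mul_le_mul_of_nonneg_left (pow_le_pow_left₀ (hjpos t ht).le hjζ n) hκ.le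
      have h3 : Jz t - Jz t/(1+X t) = κ * ζ t ^ n := by
        have hps : ζ t ^ (n-1) * ζ t = ζ t ^ n := by
          rw [← pow_succ]; congr 1; omega
        have h4 : κ * ζ t ^ n = ζ t ^ (n-1) * (κ * ζ t) := by rw [← hps]; ring
        rw [h4, hκζ t, hJzval]
        have h1X' : (1 + X t) ≠ 0 := (h1X t).ne'
        field_simp
        ring
      have h5 : -Jz t / (1+X t) = -(Jz t / (1+X t)) := neg_div _ _
      rw [h5]
      linarith
    · intro t ht
      have hJA : A t ≤ J t := by
        have h0 := hBt t ht
        have h1 : 0 ≤ (((n:ℝ)-1)/(n:ℝ)) * (g' (y t) * deriv y t ^ n) := by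
          have := (hg'ypos t ht).le
          have := (hjpos t ht).le
          positivity
        linarith
      have hJzE : Jz t ≤ Real.exp (g γ - t) := by
        rw [← hEpow t, hJzval]
        apply pow_le_pow_left₀ (hζpos t).le
        rw [hζval]
        exact div_le_self (hEpos t).le (by linarith [hXpos t])
      have e1 : Real.exp t * Real.exp (g γ - t) = Real.exp (g γ) := by
        rw [← Real.exp_add]
        congr 1
        ring
      have e2 : Real.exp t * A t = Real.exp (g (y t)) := by
        rw [hAval, ← Real.exp_add]
        congr 1
        ring
      calc Real.exp t * (Jz t - J t)
          ≤ Real.exp t * (Real.exp (g γ - t) - A t) := by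
            apply mul_le_mul_of_nonneg_left (by linarith) (Real.exp_pos t).le
        _ = Real.exp (g γ) - Real.exp (g (y t)) := by rw [mul_sub, e1, e2]
    · have h : Tendsto (fun t => Real.exp (g γ) - Real.exp (g (y t))) atTop
          (nhds (Real.exp (g γ) - Real.exp (g γ))) :=
        tendsto_const_nhds.sub ((Real.continuous_exp.tendsto _).comp hgyTop)
      simpa using h
  -- upper comparison : J ≤ W
  have hup : ∀ t, T' ≤ t → J t - W t ≤ 0 := by
    refine aux_gronwall (a := T') (d := fun t => J t - W t)
      (d' := fun t => -(A t) - (((n - 1 : ℕ) : ℝ) * ω t ^ (n-1-1) *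
        ((g' γ * (-(g'' (y t) * deriv y t)/(g' (y t))^2)) * ζ t
          + (g' γ * (g' (y t))⁻¹) * (-(ζ t)/(((n:ℝ)-1) * (1 + X t))))))
      (u := fun t => Real.exp (g γ) - Real.exp (g γ)/(1+X t)^(n-1)) ?_ ?_ ?_ ?_
    · intro t ht
      have h := (hJd t (hTle t ht)).sub (hWd t ht)
      exact h.congr_deriv (by ring)
    · intro t ht hd0
      have hps : ω t ^ (n-1-1) * ω t = ω t ^ (n-1) := by
        rw [← pow_succ]; congr 1; omega
      have hg'yp := hg'ypos t ht
      have h1X' : (1 + X t) ≠ 0 := (h1X t).ne'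
      have hm0' : ((n:ℝ)-1) ≠ 0 := hm0.ne'
      have hωj : ω t ≤ deriv y t := by
        apply le_of_pow_le_pow_left₀ (show n-1 ≠ 0 by omega) (hjpos t ht).le
        have h : W t ≤ J t := by linarith
        rw [hJval, hWval] at h
        exact h
      have hA_le : A t ≤ J t - (((n:ℝ)-1)/(n:ℝ)) * (g' (y t) * deriv y t ^ n) := by
        linarith [hBt t ht]
      have hωsub : (g' γ * (g' (y t))⁻¹) * (-(ζ t)/(((n:ℝ)-1) * (1 + X t)))
          = -(ω t)/(((n:ℝ)-1)*(1+X t)) := by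
        rw [hωval]
        ring
      have hW'val : ((n - 1 : ℕ) : ℝ) * ω t ^ (n-1-1) *
          ((g' γ * (-(g'' (y t) * deriv y t)/(g' (y t))^2)) * ζ t
            + (g' γ * (g' (y t))⁻¹) * (-(ζ t)/(((n:ℝ)-1) * (1 + X t))))
          = -(W t/(1+X t)) - ((n:ℝ)-1) * ω t^(n-1-1) *
            ((g' γ * ((g'' (y t) * deriv y t)/(g' (y t))^2)) * ζ t) := by
        rw [hωsub, hcast, hWval, ← hps]
        field_simp
        ring
      have hterm1 : 0 ≤ ((n:ℝ)-1) * ω t^(n-1-1) *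
          ((g' γ * ((g'' (y t) * deriv y t)/(g' (y t))^2)) * ζ t) := by
        have h1 := (hωpos t ht).le
        have h2 := hg''ynn t ht
        have h3 := (hjpos t ht).le
        have h4 := (hζpos t).le
        have h5 := hP.le
        positivity
      have hWX : W t - W t/(1+X t) = (((n:ℝ)-1)/(n:ℝ)) * (g' (y t) * ω t^n) := by
        have hpsn : ω t ^ (n-1) * ω t = ω t ^ n := by
          rw [← pow_succ]; congr 1; omega
        have h4 : (((n:ℝ)-1)/(n:ℝ)) * (g' (y t) * ω t^n)
            = ω t^(n-1) * ((((n:ℝ)-1)/(n:ℝ)) * g' (y t) * ω t) := by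
          rw [← hpsn]; ring
        have h5 : (((n:ℝ)-1)/(n:ℝ)) * g' (y t) * ω t = X t/(1+X t) := by
          rw [hωval, ← hκζ t, hκdef]
          field_simp
        rw [h4, h5, hWval]
        field_simp
        ring
      have hωn : ω t ^ n ≤ deriv y t ^ n := pow_le_pow_left₀ (hωpos t ht).le hωj n
      have h6 : (((n:ℝ)-1)/(n:ℝ)) * (g' (y t) * ω t^n)
          ≤ (((n:ℝ)-1)/(n:ℝ)) * (g' (y t) * deriv y t^n) := by
        apply mul_le_mul_of_nonneg_left (mul_le_mul_of_nonneg_left hωn hg'yp.le)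
        positivity
      rw [hW'val]
      linarith
    · intro t ht
      have hJle := hJe t ht
      have hζω : ζ t ≤ ω t := by
        rw [hωval]
        have h1 : (1:ℝ) ≤ g' γ * (g' (y t))⁻¹ := by
          rw [← div_eq_mul_inv]
          exact (one_le_div (hg'ypos t ht)).2 (hg'yle t ht)
        nlinarith [hζpos t]
      have hWge : Jz t ≤ W t := by
        rw [hJzval, hWval]
        exact pow_le_pow_left₀ (hζpos t).le hζω (n-1)
      have e3 : Real.exp t * Jz t = Real.exp (g γ)/(1+X t)^(n-1) := by
        rw [hJzval, hζval, div_pow, hEpow t, ← mul_div_assoc, ← Real.exp_add]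
        congr 2
        ring
      calc Real.exp t * (J t - W t)
          ≤ Real.exp t * (Real.exp (g γ - t) - Jz t) := by
            apply mul_le_mul_of_nonneg_left (by linarith) (Real.exp_pos t).le
        _ = Real.exp (g γ) - Real.exp (g γ)/(1+X t)^(n-1) := by
            rw [mul_sub, ← Real.exp_add, e3]
            congr 2
            ring
    · have h1 : Tendsto (fun t => (1 + X t)^(n-1)) atTop (nhds 1) := by
        have h0 : Tendsto (fun t => (1:ℝ) + X t) atTop (nhds ((1:ℝ) + 0)) :=
          tendsto_const_nhds.add hXTop
        have h := h0.pow (n-1)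
        simpa using h
      have h2 : Tendsto (fun t => Real.exp (g γ) - Real.exp (g γ)/(1+X t)^(n-1)) atTop
          (nhds (Real.exp (g γ) - Real.exp (g γ)/1)) :=
        tendsto_const_nhds.sub (tendsto_const_nhds.div h1 one_ne_zero)
      simpa using h2
  -- phase comparisons for first derivatives
  have hjζ2 : ∀ t, T' ≤ t → ζ t ≤ deriv y t := by
    intro t ht
    apply le_of_pow_le_pow_left₀ (show n-1 ≠ 0 by omega) (hjpos t ht).le
    have h := hlow t ht
    have h' : Jz t ≤ J t := by linarith
    rw [hJval, hJzval] at h'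
    exact h'
  have hjω : ∀ t, T' ≤ t → deriv y t ≤ ω t := by
    intro t ht
    apply le_of_pow_le_pow_left₀ (show n-1 ≠ 0 by omega) (hωpos t ht).le
    have h := hup t ht
    have h' : J t ≤ W t := by linarith
    rw [hJval, hWval] at h'
    exact h'
  have hPE : ∀ t : ℝ, ((n:ℝ)-1) * (g' γ * E t) = (n:ℝ) * X t := by
    intro t
    rw [hXκE t, hκdef]
    have hn0 : ((n:ℝ)) ≠ 0 := by positivity
    field_simp
  have hlog0 : Tendsto (fun t => Real.log (1 + X t)) atTop (nhds 0) := by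
    have h0 : Tendsto (fun t => 1 + X t) atTop (nhds (1+0)) := tendsto_const_nhds.add hXTop
    have h := (Real.continuousAt_log (by norm_num : (1:ℝ)+0 ≠ 0)).tendsto.comp h0
    rw [add_zero, Real.log_one] at h
    exact h
  -- estimate (3.19)
  have hF : ∀ t, T' ≤ t → (g γ - g (y t)) - (n:ℝ) * Real.log (1 + X t) ≤ 0 := by
    apply aux_nonpos_of_tendsto (a := T')
      (f' := fun t => -(g' (y t) * deriv y t) + (n:ℝ) * (X t/(((n:ℝ)-1) * (1 + X t))))
    · intro t ht
      have hti := hTle t ht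
      have hlog : HasDerivAt (fun s => Real.log (1 + X s)) ((0 + -(X t)/((n:ℝ)-1))/(1+X t)) t :=
        ((hasDerivAt_const t (1:ℝ)).add (hXd t)).log (h1X t).ne'
      have h := ((hasDerivAt_const t (g γ)).sub (hgy t hti)).sub (hlog.const_mul (n:ℝ))
      apply h.congr_deriv
      have h1X' : (1 + X t) ≠ 0 := (h1X t).ne'
      have hm0' : ((n:ℝ)-1) ≠ 0 := hm0.ne'
      field_simp
      ring
    · intro t ht
      have h1 : g' (y t) * deriv y t ≤ g' (y t) * ω t :=
        mul_le_mul_of_nonneg_left (hjω t ht) (hg'ypos t ht).le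
      have h2 : g' (y t) * ω t = g' γ * ζ t := by
        rw [hωval]
        field_simp [(hg'ypos t ht).ne']
      have h3 : g' γ * ζ t = (n:ℝ) * (X t/(((n:ℝ)-1)*(1+X t))) := by
        rw [hζval]
        have h1X' : (1 + X t) ≠ 0 := (h1X t).ne'
        have hm0' : ((n:ℝ)-1) ≠ 0 := hm0.ne'
        rw [show (n:ℝ) * (X t/(((n:ℝ)-1)*(1+X t))) = ((n:ℝ) * X t)/(((n:ℝ)-1)*(1+X t)) by ring,
          ← hPE t, mul_div_mul_left _ _ hm0']
        ring
      linarith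
    · have h : Tendsto (fun t => (g γ - g (y t)) - (n:ℝ) * Real.log (1 + X t)) atTop
          (nhds ((g γ - g γ) - (n:ℝ) * 0)) :=
        (tendsto_const_nhds.sub hgyTop).sub (hlog0.const_mul (n:ℝ))
      simpa using h
  -- estimate (3.18)
  have hGf : ∀ t, T' ≤ t → 0 ≤ (γ - (n:ℝ)/(g' γ) * Real.log (1 + X t)) - y t := by
    apply aux_nonneg_of_tendsto (a := T')
      (f' := fun t => (n:ℝ)/(g' γ) * (X t/(((n:ℝ)-1)*(1+X t))) - deriv y t)
    · intro t ht
      have hti := hTle t ht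
      have hlog : HasDerivAt (fun s => Real.log (1 + X s)) ((0 + -(X t)/((n:ℝ)-1))/(1+X t)) t :=
        ((hasDerivAt_const t (1:ℝ)).add (hXd t)).log (h1X t).ne'
      have h := ((hasDerivAt_const t γ).sub (hlog.const_mul ((n:ℝ)/(g' γ)))).sub (hyd t hti)
      apply h.congr_deriv
      have h1X' : (1 + X t) ≠ 0 := (h1X t).ne'
      have hm0' : ((n:ℝ)-1) ≠ 0 := hm0.ne'
      field_simp
      ring
    · intro t ht
      have h3 : (n:ℝ)/(g' γ) * (X t/(((n:ℝ)-1)*(1+X t))) = ζ t := by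
        rw [hζval]
        have h1X' : (1 + X t) ≠ 0 := (h1X t).ne'
        have hm0' : ((n:ℝ)-1) ≠ 0 := hm0.ne'
        have hg0 : g' γ ≠ 0 := hP.ne'
        rw [show (n:ℝ)/(g' γ) * (X t/(((n:ℝ)-1)*(1+X t)))
            = ((n:ℝ) * X t)/(g' γ * (((n:ℝ)-1)*(1+X t))) by rw [div_mul_div_comm],
          ← hPE t, div_eq_div_iff (mul_pos hP (mul_pos hm0 (h1X t))).ne' h1X']
        ring
      have h4 := hjζ2 t ht
      linarith
    · have h : Tendsto (fun t => (γ - (n:ℝ)/(g' γ) * Real.log (1 + X t)) - y t) atTop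
          (nhds ((γ - (n:ℝ)/(g' γ) * 0) - γ)) :=
        (tendsto_const_nhds.sub (hlog0.const_mul ((n:ℝ)/(g' γ)))).sub hylim
      simpa using h
  -- conclusion
  intro t ht
  have hc1 : y t ≤ γ - (n:ℝ)/(g' γ) * Real.log (1 + X t) := by linarith [hGf t ht]
  have hc2 : g γ - (n:ℝ) * Real.log (1 + X t) ≤ g (y t) := by linarith [hF t ht]
  have hc3 : g γ - (n:ℝ) * Real.log (1 + X t)
      = g γ + g' γ * ((γ - (n:ℝ)/(g' γ) * Real.log (1 + X t)) - γ) := by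
    field_simp
    ring
  have hXlog : Real.log (X t) = (T₁ - t)/((n:ℝ)-1) := by
    rw [hXval]
    exact Real.log_exp _
  have hlogle : Real.log (X t) ≤ Real.log (1 + X t) :=
    Real.log_le_log (hXpos t) (by linarith [hXpos t])
  have hc4 : g (y t) - t ≤ g (y t) - g γ + (((n:ℝ)-1)/(n:ℝ)) * (γ - y t) * g' γ
      - ((n:ℝ)-1) * Real.log κ := by
    have h1 : (n:ℝ)/(g' γ) * Real.log (1 + X t) ≤ γ - y t := by linarith
    have h2 : ((n:ℝ)-1) * Real.log (1 + X t) ≤ (((n:ℝ)-1)/(n:ℝ)) * (γ - y t) * g' γ := by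
      have hcnn : 0 ≤ (((n:ℝ)-1)/(n:ℝ)) * g' γ := by positivity
      have h3 := mul_le_mul_of_nonneg_left h1 hcnn
      have h4 : (((n:ℝ)-1)/(n:ℝ)) * g' γ * ((n:ℝ)/(g' γ) * Real.log (1 + X t))
          = ((n:ℝ)-1) * Real.log (1 + X t) := by
        have hg0 : g' γ ≠ 0 := hP.ne'
        have hn0 : ((n:ℝ)) ≠ 0 := by positivity
        field_simp
      have h5 : (((n:ℝ)-1)/(n:ℝ)) * g' γ * (γ - y t)
          = (((n:ℝ)-1)/(n:ℝ)) * (γ - y t) * g' γ := by ring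
      rw [h4, h5] at h3
      exact h3
    have h6 : ((n:ℝ)-1) * Real.log (X t) = T₁ - t := by
      rw [hXlog]
      field_simp
    have h7 : ((n:ℝ)-1) * Real.log (X t) ≤ ((n:ℝ)-1) * Real.log (1 + X t) :=
      mul_le_mul_of_nonneg_left hlogle hm0.le
    rw [hT₁def] at h6
    linarith
  rw [hXval t] at hc1 hc2 hc3
  exact ⟨hc1, hc2, hc3, hc4⟩
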